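/- Let V be a finite-dimensional real inner product space and let J be a linear endomorphism of V which is self-adjoint (⟨J x, y⟩ = ⟨x, J y⟩ for all x, y ∈ V) and satisfies J³ − J − id = 0. Then J = ρ·id, where ρ is the plastic number. In other words, except for the trivial case J = ρ·id, an almost plastic structure cannot be symmetric with respect to a positive definite scalar product. -/

import Mathlib

/-- The plastic number `ρ`, the unique real solution of `x³ − x − 1 = 0`. -/
noncomputable def plasticNumber : ℝ :=
  ((9 + Real.sqrt 69) / 18) ^ ((1 : ℝ) / 3) + ((9 - Real.sqrt 69) / 18) ^ ((1 : ℝ) / 3)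

lemma plasticNumber_cubed : plasticNumber ^ 3 = plasticNumber + 1 := by
  have h69 : (0:ℝ) ≤ 69 := by norm_num
  have hsq := Real.sq_sqrt h69
  have hsn := Real.sqrt_nonneg 69
  have hs9 : Real.sqrt 69 ≤ 9 := by nlinarith
  have ha : (0:ℝ) ≤ (9 + Real.sqrt 69) / 18 := by linarith
  have hb : (0:ℝ) ≤ (9 - Real.sqrt 69) / 18 := by linarith
  set a := ((9 + Real.sqrt 69) / 18) ^ ((1 : ℝ) / 3) with hadef
  set b := ((9 - Real.sqrt 69) / 18) ^ ((1 : ℝ) / 3) with hbdef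
  have ha3 : a ^ 3 = (9 + Real.sqrt 69) / 18 := by
    rw [hadef, ← Real.rpow_natCast (((9 + Real.sqrt 69) / 18) ^ ((1 : ℝ) / 3)) 3,
      ← Real.rpow_mul ha]
    norm_num
  have hb3 : b ^ 3 = (9 - Real.sqrt 69) / 18 := by
    rw [hbdef, ← Real.rpow_natCast (((9 - Real.sqrt 69) / 18) ^ ((1 : ℝ) / 3)) 3,
      ← Real.rpow_mul hb]
    norm_num
  have hab : a * b = 1 / 3 := by
    rw [hadef, hbdef, ← Real.mul_rpow ha hb]
    have : (9 + Real.sqrt 69) / 18 * ((9 - Real.sqrt 69) / 18) = 1 / 27 := by nlinarith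
    rw [this, show ((1:ℝ)/27) = ((1:ℝ)/3) ^ ((3:ℕ):ℝ) by
      rw [Real.rpow_natCast]; norm_num,
      ← Real.rpow_mul (by norm_num : (0:ℝ) ≤ 1/3)]
    norm_num
  have hexp : plasticNumber ^ 3 = a ^ 3 + b ^ 3 + 3 * (a * b) * (a + b) := by
    show (a + b) ^ 3 = _
    ring
  rw [hexp, ha3, hb3, hab]
  show _ = a + b + 1
  ring_nf

lemma plasticNumber_pos : 0 < plasticNumber := by
  have h69 : (0:ℝ) ≤ 69 := by norm_num
  have hsq := Real.sq_sqrt h69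
  have hsn := Real.sqrt_nonneg 69
  have hs9 : Real.sqrt 69 ≤ 9 := by nlinarith
  have ha : (0:ℝ) < (9 + Real.sqrt 69) / 18 := by linarith
  have := Real.rpow_pos_of_pos ha ((1:ℝ)/3)
  have hb := Real.rpow_nonneg (by linarith : (0:ℝ) ≤ (9 - Real.sqrt 69) / 18) ((1:ℝ)/3)
  unfold plasticNumber
  linarith

lemma plasticNumber_sq : 4 < 3 * plasticNumber ^ 2 := by
  have h3 := plasticNumber_cubed
  have hp := plasticNumber_pos
  set ρ := plasticNumber
  have h1 : 1 < ρ := by nlinarith [mul_pos hp hp, sq_nonneg (ρ - 1), sq_nonneg (ρ + 1), mul_pos (mul_pos hp hp) hp]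
  nlinarith

/-- A self-adjoint almost plastic structure (`J³ − J − id = 0` with
`⟨J x, y⟩ = ⟨x, J y⟩`) on a finite-dimensional real inner product space is the trivial one
`J = ρ·id`, where `ρ` is the plastic number. -/
theorem selfadjoint_almost_plastic_is_trivial (V : Type*) [NormedAddCommGroup V]
    [InnerProductSpace ℝ V] [FiniteDimensional ℝ V] (J : Module.End ℝ V)
    (hsym : ∀ x y : V, (inner ℝ (J x) y : ℝ) = inner ℝ x (J y))
    (hJ : J ^ 3 - J - 1 = 0) :
    J = plasticNumber • (1 : Module.End ℝ V) := by
  have hρ3 : plasticNumber ^ 3 = plasticNumber + 1 := plasticNumber_cubed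
  have hρp : 0 < plasticNumber := plasticNumber_pos
  have hρs : 4 < 3 * plasticNumber ^ 2 := plasticNumber_sq
  set ρ := plasticNumber
  have hJ3 : J ^ 3 = J + 1 := by rwa [sub_sub, sub_eq_zero] at hJ
  have hJ3x : ∀ x : V, J (J (J x)) = J x + x := by
    intro x
    have h : (J ^ 3) x = (J + 1) x := by rw [hJ3]
    simpa [pow_succ, Module.End.mul_apply] using h
  ext x
  show J x = ρ • x
  by_contra hne
  set y := J x - ρ • x with hy
  have hy0 : y ≠ 0 := fun h => hne (by rwa [hy, sub_eq_zero] at h)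
  have hJy : J y = J (J x) - ρ • J x := by simp [hy, map_sub, map_smul]
  have hJJy : J (J y) = J x + x - ρ • J (J x) := by
    rw [hJy]; simp [map_sub, map_smul, hJ3x]
  have hvec : J (J y) + ρ • J y + (ρ ^ 2 - 1) • y = 0 := by
    rw [hJJy, hJy, hy]
    match_scalars <;> linarith [hρ3]
  have hinner : (0:ℝ) = inner ℝ (J (J y) + ρ • J y + (ρ ^ 2 - 1) • y) y := by
    rw [hvec]; simp
  rw [inner_add_left, inner_add_left, real_inner_smul_left, real_inner_smul_left,
    hsym (J y) y, real_inner_self_eq_norm_sq, real_inner_self_eq_norm_sq] at hinner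
  have hCS := abs_real_inner_le_norm (J y) y
  rw [abs_le] at hCS
  have hny : 0 < ‖y‖ := norm_pos_iff.2 hy0
  nlinarith [sq_nonneg (2 * ‖J y‖ - ρ * ‖y‖), mul_pos hny hny,
    mul_nonneg hρp.le (show (0:ℝ) ≤ inner ℝ (J y) y + ‖J y‖ * ‖y‖ by linarith [hCS.1])]
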